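/- Suppose ζ satisfies Properties P1–P4, and let ρ : (0,∞) → [0,∞) be the function such that ρ(λ) = lim_{s→∞} E[ζ(H_{λ,s})]/(λ s^d) for each λ > 0 (this limit exists). Let K := max(c₁ + ζ({o}), c₂ − ζ({o})), where c₁, c₂ are the constants in P3 and P4. Then for all 0 < λ ≤ λ′, |λ′·ρ(λ′) − λ·ρ(λ)| ≤ K·(λ′ − λ); that is, λ ↦ λ·ρ(λ) is Lipschitz continuous on (0,∞) with Lipschitz constant at most K, and hence λ ↦ ρ(λ) is continuous on (0,∞). -/

import Mathlib

open MeasureTheory ProbabilityTheory Filter Set Metric Bornology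
open scoped Classical ENNReal NNReal symmDiff

noncomputable section

/-- Points of `ℝ^d`. -/
abbrev Pt (d : ℕ) := EuclideanSpace ℝ (Fin d)

/-- The half-open cube `Q_s = [-s/2, s/2)^d`. -/
def cube (d : ℕ) (s : ℝ) : Set (Pt d) := {x | ∀ i, x i ∈ Set.Ico (-(s / 2)) (s / 2)}

/-- The uniform distribution on `Q_s`. -/
def unifCube (d : ℕ) (s : ℝ) : Measure (Pt d) :=
  (volume (cube d s))⁻¹ • volume.restrict (cube d s)

/-- `E[ζ(H_{λ,s})]`, where `H_{λ,s} = {Y_1, …, Y_N}` with `N` a Poisson random variable of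
mean `λ s^d` independent of an i.i.d. sequence `Y_1, Y_2, …` of uniform points of `Q_s`. -/
def poissonExp (d : ℕ) (zeta : Finset (Pt d) → ℝ) (lam s : ℝ) : ℝ :=
  ∑' k : ℕ, (Real.exp (-(lam * s ^ d)) * (lam * s ^ d) ^ k / (Nat.factorial k : ℝ)) *
    ∫ y : Fin k → Pt d, zeta (Finset.image y Finset.univ) ∂(Measure.pi fun _ => unifCube d s)

/-- `|∂_Z(Y)|`: the number of points of `Y` lying within Euclidean distance 1 of `Z`. -/
def bdry (d : ℕ) (Y Z : Finset (Pt d)) : ℕ :=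
  {y ∈ (Y : Set (Pt d)) | ∃ z ∈ Z, dist y z ≤ 1}.ncard

/-- The rescaled set `r⁻¹ 𝒳`. -/
def scaleSet (d : ℕ) (r : ℝ) (X : Finset (Pt d)) : Finset (Pt d) :=
  X.image fun x => r⁻¹ • x

/-- `ζ*(A) = sup {ζ(X) : X ⊆ A finite}`. -/
def zetaStar (d : ℕ) (zeta : Finset (Pt d) → ℝ) (A : Set (Pt d)) : ℝ :=
  sSup {t | ∃ X : Finset (Pt d), (X : Set (Pt d)) ⊆ A ∧ t = zeta X}

/-- Domination number of the geometric graph `G(X, r)`. -/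
def domNum (d : ℕ) (r : ℝ) (X : Finset (Pt d)) : ℕ :=
  sInf {n | ∃ A ⊆ X, A.card = n ∧ ∀ x ∈ X, ∃ a ∈ A, dist x a ≤ r}

/-- Independence number of the geometric graph `G(X, r)`. -/
def indepNum (d : ℕ) (r : ℝ) (X : Finset (Pt d)) : ℕ :=
  sSup {n | ∃ A ⊆ X, A.card = n ∧ ∀ x ∈ A, ∀ y ∈ A, x ≠ y → r < dist x y}

/-- Clique-covering number of the geometric graph `G(X, r)`. -/
def cliqueCoverNum (d : ℕ) (r : ℝ) (X : Finset (Pt d)) : ℕ :=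
  sInf {n | ∃ P : Finset (Finset (Pt d)), P.card = n ∧
    (∀ C ∈ P, C ⊆ X ∧ C.Nonempty ∧ ∀ x ∈ C, ∀ y ∈ C, x ≠ y → dist x y ≤ r) ∧
    ∀ x ∈ X, ∃! C, C ∈ P ∧ x ∈ C}

/-- Vertex cover number of the geometric graph `G(X, r)`. -/
def vcNum (d : ℕ) (r : ℝ) (X : Finset (Pt d)) : ℕ :=
  sInf {n | ∃ A ⊆ X, A.card = n ∧
    ∀ x ∈ X, ∀ y ∈ X, x ≠ y → dist x y ≤ r → x ∈ A ∨ y ∈ A}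

/-- Number of isolated vertices of the geometric graph `G(X, r)`. -/
def isolCount (d : ℕ) (r : ℝ) (X : Finset (Pt d)) : ℕ :=
  {x ∈ (X : Set (Pt d)) | ∀ y ∈ X, y ≠ x → r < dist x y}.ncard

/-- `κ(A)`: the minimal number of closed unit balls whose union contains `A`. -/
def covNum (d : ℕ) (A : Set (Pt d)) : ℕ :=
  sInf {n | ∃ C : Finset (Pt d), C.card = n ∧ A ⊆ ⋃ x ∈ C, Metric.closedBall x 1}

/-- `α*(A)`: the maximum cardinality of a finite subset of `A` with pairwise distances `> 1`. -/
def packNum (d : ℕ) (A : Set (Pt d)) : ℕ :=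
  sSup {n | ∃ X : Finset (Pt d), (X : Set (Pt d)) ⊆ A ∧ X.card = n ∧
    ∀ x ∈ X, ∀ y ∈ X, x ≠ y → 1 < dist x y}

/-- `γ*(A) = sup {γ(G(X,1)) : X ⊆ A finite}`. -/
def domStar (d : ℕ) (A : Set (Pt d)) : ℕ :=
  sSup {n | ∃ X : Finset (Pt d), (X : Set (Pt d)) ⊆ A ∧ domNum d 1 X = n}

/-- Minimum weight of a travelling salesman tour through `X`, for the weight function `w`
(a tour is a Hamiltonian cycle of the complete graph on `X`, and an edge `{x,y}` has
weight `w (x - y)`), with the convention that the value is `0` when `|X| ≤ 2`. -/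
def TSPw (d : ℕ) (w : Pt d → ℝ) (X : Finset (Pt d)) : ℝ :=
  if h : 3 ≤ X.card then
    haveI : NeZero X.card := ⟨by omega⟩
    sInf {t | ∃ g : Fin X.card → Pt d, Function.Injective g ∧ (∀ i, g i ∈ X) ∧
      t = ∑ i, w (g (i + 1) - g i)}
  else 0

/-- Maximum `H`-packing number of the geometric graph `G(X, r)`. -/
def hPackNum {V : Type} [Fintype V] (H : SimpleGraph V) (d : ℕ) (r : ℝ)
    (X : Finset (Pt d)) : ℕ :=
  sSup {m | ∃ φ : Fin m → V → Pt d,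
    (∀ i, Function.Injective (φ i)) ∧ (∀ i v, φ i v ∈ X) ∧
    (∀ i u v, H.Adj u v → dist (φ i u) (φ i v) ≤ r) ∧
    (∀ i j, i ≠ j → ∀ u v, φ i u ≠ φ j v)}


lemma cube_eq_preimage (d : ℕ) (s : ℝ) :
    cube d s = ((MeasurableEquiv.toLp 2 (Fin d → ℝ)).symm) ⁻¹' (Set.univ.pi fun _ => Set.Ico (-(s/2)) (s/2)) := by
  ext x; simp [cube, Set.mem_pi]

lemma volume_cube (d : ℕ) (s : ℝ) (hs : 0 < s) :
    volume (cube d s) = (ENNReal.ofReal s) ^ d := by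
  rw [cube_eq_preimage, (EuclideanSpace.volume_preserving_symm_measurableEquiv_toLp (Fin d)).measure_preimage
    (MeasurableSet.univ_pi (fun _ => measurableSet_Ico)).nullMeasurableSet]
  rw [volume_pi_pi]
  simp only [Real.volume_Ico, Finset.prod_const, Finset.card_univ, Fintype.card_fin]
  rw [show (s/2 - -(s/2)) = s by ring]

lemma unifCube_prob (d : ℕ) (s : ℝ) (hs : 0 < s) :
    IsProbabilityMeasure (unifCube d s) := by
  constructor
  have h := volume_cube d s hs
  show (volume (cube d s))⁻¹ • volume.restrict (cube d s) Set.univ = 1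
  rw [Measure.restrict_apply MeasurableSet.univ, Set.univ_inter, h, smul_eq_mul,
    ENNReal.inv_mul_cancel]
  · exact pow_ne_zero _ (by simp [ENNReal.ofReal_eq_zero, not_le, hs])
  · exact ENNReal.pow_ne_top ENNReal.ofReal_ne_top

lemma unifCube_noAtoms (d : ℕ) (hd : 1 ≤ d) (s : ℝ) : NoAtoms (unifCube d s) := by
  constructor
  intro x
  have hx : volume ({x} : Set (Pt d)) = 0 := by
    have : ({x} : Set (Pt d)) = ((MeasurableEquiv.toLp 2 (Fin d → ℝ)).symm) ⁻¹' {((MeasurableEquiv.toLp 2 (Fin d → ℝ)).symm) x} := by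
      ext y
      simp only [Set.mem_preimage, Set.mem_singleton_iff]
      exact ((MeasurableEquiv.toLp 2 (Fin d → ℝ)).symm).injective.eq_iff.symm
    rw [this, (EuclideanSpace.volume_preserving_symm_measurableEquiv_toLp (Fin d)).measure_preimage
      (measurableSet_singleton _).nullMeasurableSet]
    have : ({((MeasurableEquiv.toLp 2 (Fin d → ℝ)).symm) x} : Set (Fin d → ℝ)) =
        Set.univ.pi fun i => {(((MeasurableEquiv.toLp 2 (Fin d → ℝ)).symm) x) i} := by
      ext y; simp [funext_iff]
    rw [this, volume_pi_pi]
    simp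
    omega
  rw [unifCube, Measure.smul_apply, Measure.restrict_apply (measurableSet_singleton x)]
  have : volume ({x} ∩ cube d s) = 0 := measure_mono_null Set.inter_subset_left hx
  rw [this]; simp

section zetalem
variable {d : ℕ} {zeta : Finset (Pt d) → ℝ} {c1 c2 : ℝ}

lemma zeta_single (hP2 : ∀ (X : Finset (Pt d)) (x : Pt d), zeta (X.image fun y => x + y) = zeta X)
    (z : Pt d) : zeta {z} = zeta {0} := by
  have := hP2 {0} z
  simpa [Finset.image_singleton] using this

lemma zeta_insert_le
    (hP2 : ∀ (X : Finset (Pt d)) (x : Pt d), zeta (X.image fun y => x + y) = zeta X)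
    (hP3 : ∀ Y Z : Finset (Pt d), Disjoint Y Z → zeta (Y ∪ Z) ≤ zeta Y + zeta Z + c1)
    {z : Pt d} {X : Finset (Pt d)} (hz : z ∉ X) :
    zeta (insert z X) ≤ zeta X + (zeta {0} + c1) := by
  have hdisj : Disjoint X ({z} : Finset (Pt d)) := by
    simp [Finset.disjoint_singleton_right, hz]
  have := hP3 X {z} hdisj
  rw [zeta_single hP2 z] at this
  have hu : X ∪ {z} = insert z X := by
    rw [Finset.union_comm]; rfl
  rw [hu] at this
  linarith

lemma bdry_singleton_le (z : Pt d) (X : Finset (Pt d)) : (bdry d {z} X : ℝ) ≤ 1 := by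
  have h1 : {y ∈ (({z} : Finset (Pt d)) : Set (Pt d)) | ∃ w ∈ X, dist y w ≤ 1} ⊆ ({z} : Set (Pt d)) := by
    intro y hy; simpa using hy.1
  have h2 : bdry d {z} X ≤ 1 := by
    have := Set.ncard_le_ncard h1 (Set.finite_singleton z)
    rwa [Set.ncard_singleton] at this
  exact_mod_cast h2

lemma zeta_insert_ge
    (hP2 : ∀ (X : Finset (Pt d)) (x : Pt d), zeta (X.image fun y => x + y) = zeta X)
    (hc2 : 0 ≤ c2)
    (hP4 : ∀ Y Z : Finset (Pt d), Disjoint Y Z →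
      zeta Y + zeta Z - c2 * (bdry d Y Z : ℝ) ≤ zeta (Y ∪ Z))
    {z : Pt d} {X : Finset (Pt d)} (hz : z ∉ X) :
    zeta X + (zeta {0} - c2) ≤ zeta (insert z X) := by
  have hdisj : Disjoint ({z} : Finset (Pt d)) X := by
    simp [Finset.disjoint_singleton_left, hz]
  have h := hP4 {z} X hdisj
  rw [zeta_single hP2 z] at h
  have hu : ({z} : Finset (Pt d)) ∪ X = insert z X := rfl
  rw [hu] at h
  have hb := bdry_singleton_le z X
  nlinarith [hb, hc2]

lemma zeta_le_card (hzeta0 : zeta ∅ = 0)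
    (hP2 : ∀ (X : Finset (Pt d)) (x : Pt d), zeta (X.image fun y => x + y) = zeta X)
    (hP3 : ∀ Y Z : Finset (Pt d), Disjoint Y Z → zeta (Y ∪ Z) ≤ zeta Y + zeta Z + c1)
    (X : Finset (Pt d)) : zeta X ≤ X.card * (zeta {0} + c1) := by
  induction X using Finset.induction with
  | empty => simp [hzeta0]
  | @insert a X hz ih =>
    have h1 := zeta_insert_le hP2 hP3 hz
    rw [Finset.card_insert_of_notMem hz]
    push_cast
    linarith
end zetalem

section Fint
variable {d : ℕ} {zeta : Finset (Pt d) → ℝ} {c1 c2 : ℝ}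

def Fint (d : ℕ) (zeta : Finset (Pt d) → ℝ) (s : ℝ) (k : ℕ) : ℝ :=
  ∫ y : Fin k → Pt d, zeta (Finset.image y Finset.univ) ∂(Measure.pi fun _ => unifCube d s)

lemma image_cons {k : ℕ} (z : Pt d) (y : Fin k → Pt d) :
    Finset.image (Fin.cons z y : Fin (k+1) → Pt d) Finset.univ
      = insert z (Finset.image y Finset.univ) := by
  ext a
  simp only [Finset.mem_image, Finset.mem_univ, true_and, Finset.mem_insert]
  rw [Fin.exists_fin_succ]
  simp [eq_comm]

lemma Fint_nonneg (hzetann : ∀ X, 0 ≤ zeta X) (s : ℝ) (k : ℕ) : 0 ≤ Fint d zeta s k :=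
  integral_nonneg fun _ => hzetann _

lemma Fint_le (hd : 1 ≤ d) {s : ℝ} (hs : 0 < s) (hzeta0 : zeta ∅ = 0)
    (hzetann : ∀ X, 0 ≤ zeta X) (hc1 : 0 ≤ c1)
    (hP2 : ∀ (X : Finset (Pt d)) (x : Pt d), zeta (X.image fun y => x + y) = zeta X)
    (hP3 : ∀ Y Z : Finset (Pt d), Disjoint Y Z → zeta (Y ∪ Z) ≤ zeta Y + zeta Z + c1)
    (k : ℕ) : Fint d zeta s k ≤ k * (zeta {0} + c1) := by
  haveI := unifCube_prob d s hs
  have hb : ∀ y : Fin k → Pt d, ‖zeta (Finset.image y Finset.univ)‖ ≤ k * (zeta {0} + c1) := by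
    intro y
    rw [Real.norm_eq_abs, abs_of_nonneg (hzetann _)]
    refine (zeta_le_card hzeta0 hP2 hP3 _).trans ?_
    have hcard : (Finset.image y Finset.univ).card ≤ k := by
      refine (Finset.card_image_le).trans ?_
      simp
    have hnn : 0 ≤ zeta {0} + c1 := add_nonneg (hzetann _) hc1
    exact mul_le_mul_of_nonneg_right (by exact_mod_cast hcard) hnn
  have := norm_integral_le_of_norm_le_const (μ := (Measure.pi fun _ : Fin k => unifCube d s))
    (ae_of_all _ hb)
  rw [probReal_univ, mul_one] at this
  calc Fint d zeta s k ≤ ‖Fint d zeta s k‖ := le_abs_self _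
  _ ≤ _ := this

lemma Fint_succ_bound (hd : 1 ≤ d) {s : ℝ} (hs : 0 < s) (hzeta0 : zeta ∅ = 0)
    (hzetann : ∀ X, 0 ≤ zeta X)
    (hP1 : ∀ k : ℕ, Measurable fun y : Fin k → Pt d => zeta (Finset.image y Finset.univ))
    (hP2 : ∀ (X : Finset (Pt d)) (x : Pt d), zeta (X.image fun y => x + y) = zeta X)
    (hc1 : 0 ≤ c1) (hc2 : 0 ≤ c2)
    (hP3 : ∀ Y Z : Finset (Pt d), Disjoint Y Z → zeta (Y ∪ Z) ≤ zeta Y + zeta Z + c1)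
    (hP4 : ∀ Y Z : Finset (Pt d), Disjoint Y Z →
      zeta Y + zeta Z - c2 * (bdry d Y Z : ℝ) ≤ zeta (Y ∪ Z))
    (k : ℕ) :
    |Fint d zeta s (k+1) - Fint d zeta s k| ≤ max (c1 + zeta {0}) (c2 - zeta {0}) := by
  haveI := unifCube_prob d s hs
  haveI : NullSingletonClass (unifCube d s) := unifCube_noAtoms d hd s
  set μ := unifCube d s with hμ
  set ν : Measure (Fin k → Pt d) := Measure.pi fun _ => μ with hν
  set P : Measure (Pt d × (Fin k → Pt d)) := μ.prod ν with hP
  haveI : IsProbabilityMeasure ν := by rw [hν]; infer_instance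
  haveI : IsProbabilityMeasure P := by rw [hP]; infer_instance
  set K := max (c1 + zeta {0}) (c2 - zeta {0}) with hK
  set g : Pt d × (Fin k → Pt d) → ℝ :=
    fun p => zeta (Finset.image (Fin.cons p.1 p.2 : Fin (k+1) → Pt d) Finset.univ) with hg
  set h : Pt d × (Fin k → Pt d) → ℝ := fun p => zeta (Finset.image p.2 Finset.univ) with hh
  have mcons : Measurable fun p : Pt d × (Fin k → Pt d) => (Fin.cons p.1 p.2 : Fin (k+1) → Pt d) := by
    apply measurable_pi_lambda
    intro i
    refine Fin.cases ?_ ?_ i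
    · simpa using measurable_fst
    · intro j
      exact (measurable_pi_apply j).comp measurable_snd
  have mg : Measurable g := (hP1 (k+1)).comp mcons
  have mh : Measurable h := (hP1 k).comp measurable_snd
  -- identification of F (k+1)
  have hMP := measurePreserving_piFinSuccAbove (fun _ : Fin (k+1) => μ) 0
  have hF1 : Fint d zeta s (k+1) = ∫ p, g p ∂P := by
    have hcomp := (MeasurePreserving.integral_comp hMP
      (MeasurableEquiv.piFinSuccAbove (fun _ : Fin (k+1) => Pt d) 0).measurableEmbedding g)
    rw [show Fint d zeta s (k+1)
        = ∫ y : Fin (k+1) → Pt d, zeta (Finset.image y Finset.univ)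
            ∂(Measure.pi fun _ => μ) from rfl, ← hcomp]
    apply integral_congr_ae
    apply ae_of_all
    intro y
    have hy : (Fin.cons (y 0) (fun j => y ((0 : Fin (k+1)).succAbove j)) : Fin (k+1) → Pt d) = y := by
      funext i
      refine Fin.cases ?_ ?_ i
      · simp
      · intro j
        simp [Fin.zero_succAbove]
    show zeta (Finset.image y Finset.univ) = g (MeasurableEquiv.piFinSuccAbove (fun _ : Fin (k+1) => Pt d) 0 y)
    rw [hg]
    show zeta (Finset.image y Finset.univ) = zeta (Finset.image
      (Fin.cons (y 0) (fun j => y ((0 : Fin (k+1)).succAbove j)) : Fin (k+1) → Pt d) Finset.univ)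
    rw [hy]
  -- identification of F k
  have hF2 : Fint d zeta s k = ∫ p, h p ∂P := by
    rw [show Fint d zeta s k
        = ∫ y : Fin k → Pt d, zeta (Finset.image y Finset.univ) ∂ν from rfl]
    have : ν = P.map Prod.snd := by
      rw [hP, Measure.map_snd_prod, measure_univ, one_smul]
    rw [this, integral_map measurable_snd.aemeasurable (hP1 k).aestronglyMeasurable]
  -- integrability
  have hbg : ∀ p, ‖g p‖ ≤ (k+1) * (zeta {0} + c1) := by
    intro p
    rw [Real.norm_eq_abs, abs_of_nonneg (hzetann _)]
    refine (zeta_le_card hzeta0 hP2 hP3 _).trans ?_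
    have hcard : (Finset.image (Fin.cons p.1 p.2 : Fin (k+1) → Pt d) Finset.univ).card ≤ k+1 := by
      refine (Finset.card_image_le).trans ?_
      simp
    exact mul_le_mul_of_nonneg_right (by exact_mod_cast hcard) (add_nonneg (hzetann _) hc1)
  have hbh : ∀ p, ‖h p‖ ≤ k * (zeta {0} + c1) := by
    intro p
    rw [Real.norm_eq_abs, abs_of_nonneg (hzetann _)]
    refine (zeta_le_card hzeta0 hP2 hP3 _).trans ?_
    have hcard : (Finset.image p.2 Finset.univ).card ≤ k := by
      refine (Finset.card_image_le).trans ?_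
      simp
    exact mul_le_mul_of_nonneg_right (by exact_mod_cast hcard) (add_nonneg (hzetann _) hc1)
  have hgi : Integrable g P :=
    ⟨mg.aestronglyMeasurable, HasFiniteIntegral.of_bounded (ae_of_all _ hbg)⟩
  have hhi : Integrable h P :=
    ⟨mh.aestronglyMeasurable, HasFiniteIntegral.of_bounded (ae_of_all _ hbh)⟩
  -- a.e. the first point avoids the rest
  have hzero : ∀ i : Fin k, P {p : Pt d × (Fin k → Pt d) | p.1 = p.2 i} = 0 := by
    intro i
    have hms : MeasurableSet {p : Pt d × (Fin k → Pt d) | p.1 = p.2 i} :=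
      measurableSet_eq_fun measurable_fst ((measurable_pi_apply i).comp measurable_snd)
    rw [hP, Measure.prod_apply hms]
    have hsec : ∀ x : Pt d,
        (Prod.mk x ⁻¹' {p : Pt d × (Fin k → Pt d) | p.1 = p.2 i}) = {y : Fin k → Pt d | y i = x} := by
      intro x; ext y; simp [eq_comm]
    calc ∫⁻ x, ν (Prod.mk x ⁻¹' {p : Pt d × (Fin k → Pt d) | p.1 = p.2 i}) ∂μ
        = ∫⁻ _, 0 ∂μ := by
          apply lintegral_congr
          intro x
          rw [hsec x, hν, Measure.pi_hyperplane]
      _ = 0 := lintegral_zero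
  have hae : ∀ᵐ p ∂P, p.1 ∉ Finset.image p.2 Finset.univ := by
    have hall : ∀ᵐ p ∂P, ∀ i : Fin k, ¬ (p.1 = p.2 i) := by
      rw [ae_all_iff]
      intro i
      rw [ae_iff]
      simpa using hzero i
    filter_upwards [hall] with p hp hmem
    rcases Finset.mem_image.1 hmem with ⟨i, -, hi⟩
    exact hp i hi.symm
  -- a.e. bound
  have hbd : ∀ᵐ p ∂P, ‖g p - h p‖ ≤ K := by
    filter_upwards [hae] with p hp
    have h1 := zeta_insert_le hP2 hP3 hp
    have h2 := zeta_insert_ge hP2 hc2 hP4 hp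
    have hgp : g p = zeta (insert p.1 (Finset.image p.2 Finset.univ)) := by
      rw [hg]; simp only []; rw [image_cons]
    have hK1 : c1 + zeta {0} ≤ K := le_max_left _ _
    have hK2 : c2 - zeta {0} ≤ K := le_max_right _ _
    rw [Real.norm_eq_abs, abs_le]
    constructor
    · rw [hgp, hh]; simp only []; linarith
    · rw [hgp, hh]; simp only []; linarith
  -- conclude
  have hdiff : Fint d zeta s (k+1) - Fint d zeta s k = ∫ p, (g p - h p) ∂P := by
    rw [hF1, hF2, integral_sub hgi hhi]
  rw [hdiff, ← Real.norm_eq_abs]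
  have := norm_integral_le_of_norm_le_const (μ := P) hbd
  rwa [probReal_univ, mul_one] at this

end Fint

section pk

def pk (t : ℝ) (k : ℕ) : ℝ := Real.exp (-t) * t ^ k / (Nat.factorial k : ℝ)

lemma pk_nonneg {t : ℝ} (ht : 0 ≤ t) (k : ℕ) : 0 ≤ pk t k := by
  unfold pk; positivity

lemma summable_pk (t : ℝ) : Summable (pk t) := by
  have := (Real.summable_pow_div_factorial t).mul_left (Real.exp (-t))
  refine this.congr fun k => ?_
  rw [pk, mul_div_assoc]

lemma tsum_pk (t : ℝ) : ∑' k, pk t k = 1 := by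
  have h1 : ∑' k : ℕ, t ^ k / (Nat.factorial k : ℝ) = Real.exp t := by
    rw [Real.exp_eq_exp_ℝ, NormedSpace.exp_eq_tsum_div]
  calc ∑' k, pk t k = ∑' k : ℕ, Real.exp (-t) * (t ^ k / (Nat.factorial k : ℝ)) := by
        apply tsum_congr; intro k; rw [pk, mul_div_assoc]
    _ = Real.exp (-t) * Real.exp t := by rw [tsum_mul_left, h1]
    _ = 1 := by rw [← Real.exp_add, neg_add_cancel, Real.exp_zero]

lemma pk_succ_mul (t : ℝ) (k : ℕ) : pk t (k+1) * ((k:ℝ)+1) = t * pk t k := by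
  have h1 : ((k+1).factorial : ℝ) = ((k:ℝ)+1) * (k.factorial : ℝ) := by
    rw [Nat.factorial_succ]; push_cast; ring
  have h2 : ((k:ℝ)+1) ≠ 0 := by positivity
  have h3 : ((k.factorial : ℝ)) ≠ 0 := Nat.cast_ne_zero.2 (Nat.factorial_ne_zero _)
  rw [pk, pk, h1, pow_succ]
  field_simp

lemma summable_pk_mul (t : ℝ) : Summable (fun k => pk t k * k) := by
  rw [← summable_nat_add_iff 1]
  refine ((summable_pk t).mul_left t).congr fun k => ?_
  push_cast
  rw [pk_succ_mul]

lemma tsum_pk_mul (t : ℝ) : ∑' k, pk t k * k = t := by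
  rw [Summable.tsum_eq_zero_add (summable_pk_mul t)]
  simp only [Nat.cast_zero, mul_zero, zero_add]
  calc ∑' k : ℕ, pk t (k+1) * ((k:ℕ)+1 : ℕ) = ∑' k : ℕ, t * pk t k := by
        apply tsum_congr; intro k
        push_cast
        rw [pk_succ_mul]
    _ = t := by rw [tsum_mul_left, tsum_pk, mul_one]

lemma pk_conv (t u : ℝ) (n : ℕ) :
    ∑ j ∈ Finset.range (n+1), pk t (n - j) * pk u j = pk (t + u) n := by
  have key : ∀ j ∈ Finset.range (n+1), pk t (n - j) * pk u j
      = (Real.exp (-(t+u)) / (Nat.factorial n : ℝ)) * (u ^ j * t ^ (n - j) * (n.choose j : ℝ)) := by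
    intro j hj
    have hj' : j ≤ n := Nat.lt_succ_iff.1 (Finset.mem_range.1 hj)
    have h3 : ∀ m : ℕ, ((m.factorial : ℝ)) ≠ 0 := fun m => Nat.cast_ne_zero.2 (Nat.factorial_ne_zero _)
    rw [pk, pk, Nat.cast_choose ℝ hj', neg_add, Real.exp_add]
    field_simp
  rw [Finset.sum_congr rfl key, ← Finset.mul_sum, ← add_pow, pk, add_comm u t]
  ring

end pk

section seq

def uaux (t dt : ℝ) (F : ℕ → ℝ) : ℕ × ℕ → ℝ := fun q => pk t q.1 * pk dt q.2 * F (q.1 + q.2)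
def vaux (t dt : ℝ) (F : ℕ → ℝ) : ℕ × ℕ → ℝ := fun q => (pk t q.1 * F q.1) * pk dt q.2
def waux (t dt : ℝ) (F : ℕ → ℝ) : ℕ × ℕ → ℝ :=
  fun q => if q.2 ≤ q.1 then (pk t (q.1 - q.2) * pk dt q.2) * F q.1 else 0
def eaux : ℕ × ℕ → ℕ × ℕ := fun q => (q.1 + q.2, q.2)

lemma seq_diff_bound (F : ℕ → ℝ) (K Kup : ℝ) (hK0 : 0 ≤ K) (hKup0 : 0 ≤ Kup)
    (hF0 : ∀ n, 0 ≤ F n) (hFle : ∀ n : ℕ, F n ≤ n * Kup)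
    (hstep : ∀ k : ℕ, |F (k + 1) - F k| ≤ K)
    {t dt : ℝ} (ht : 0 ≤ t) (hdt : 0 ≤ dt) :
    |(∑' n, pk (t + dt) n * F n) - ∑' n, pk t n * F n| ≤ K * dt := by
  have hFstep : ∀ m j : ℕ, |F (m + j) - F m| ≤ K * j := by
    intro m j
    induction j with
    | zero => simp
    | succ j ih =>
      have h1 := hstep (m + j)
      have heq : F (m + (j+1)) - F m = (F ((m+j)+1) - F (m+j)) + (F (m+j) - F m) := by
        rw [show m + (j+1) = (m+j)+1 by ring]; ring
      rw [heq]
      calc |(F ((m+j)+1) - F (m+j)) + (F (m+j) - F m)|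
          ≤ |F ((m+j)+1) - F (m+j)| + |F (m+j) - F m| := abs_add_le _ _
        _ ≤ K + K * j := add_le_add h1 ih
        _ = K * ((j:ℝ)+1) := by ring
        _ = K * ((j+1 : ℕ) : ℝ) := by push_cast; ring
  have hpkt0 : ∀ k, 0 ≤ pk t k := pk_nonneg ht
  have hpkd0 : ∀ k, 0 ≤ pk dt k := pk_nonneg hdt
  have hmaj1 : Summable (fun q : ℕ × ℕ => (pk t q.1 * q.1) * pk dt q.2) :=
    (summable_pk_mul t).mul_of_nonneg (summable_pk dt)
      (fun k => mul_nonneg (hpkt0 k) (Nat.cast_nonneg k)) hpkd0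
  have hmaj2 : Summable (fun q : ℕ × ℕ => pk t q.1 * (pk dt q.2 * q.2)) :=
    (summable_pk t).mul_of_nonneg (summable_pk_mul dt) hpkt0
      (fun k => mul_nonneg (hpkd0 k) (Nat.cast_nonneg k))
  have hsu : Summable (uaux t dt F) := by
    refine Summable.of_norm_bounded
      (g := fun q => ((pk t q.1 * q.1) * pk dt q.2) * Kup + (pk t q.1 * (pk dt q.2 * q.2)) * Kup)
      ((hmaj1.mul_right Kup).add (hmaj2.mul_right Kup)) ?_
    rintro ⟨m, j⟩
    have h0 : (0:ℝ) ≤ pk t m * pk dt j := mul_nonneg (hpkt0 m) (hpkd0 j)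
    rw [uaux, Real.norm_eq_abs, abs_of_nonneg (mul_nonneg h0 (hF0 _))]
    calc pk t m * pk dt j * F (m + j)
        ≤ pk t m * pk dt j * (((m + j : ℕ) : ℝ) * Kup) :=
          mul_le_mul_of_nonneg_left (hFle _) h0
      _ = ((pk t m * m) * pk dt j) * Kup + (pk t m * (pk dt j * j)) * Kup := by
          push_cast; ring
  have hsv : Summable (vaux t dt F) := by
    refine Summable.of_norm_bounded (g := fun q => ((pk t q.1 * q.1) * pk dt q.2) * Kup)
      (hmaj1.mul_right Kup) ?_
    rintro ⟨m, j⟩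
    have h0 : (0:ℝ) ≤ pk t m * F m := mul_nonneg (hpkt0 m) (hF0 m)
    rw [vaux, Real.norm_eq_abs, abs_of_nonneg (mul_nonneg h0 (hpkd0 j))]
    calc pk t m * F m * pk dt j
        ≤ pk t m * (((m:ℕ):ℝ) * Kup) * pk dt j :=
          mul_le_mul_of_nonneg_right (mul_le_mul_of_nonneg_left (hFle m) (hpkt0 m)) (hpkd0 j)
      _ = ((pk t m * m) * pk dt j) * Kup := by ring
  have he : Function.Injective eaux := by
    rintro ⟨a, b⟩ ⟨a', b'⟩ hq
    simp only [eaux, Prod.mk.injEq] at hq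
    refine Prod.ext ?_ ?_ <;> simp <;> omega
  have hwe : ∀ q, waux t dt F (eaux q) = uaux t dt F q := by
    rintro ⟨m, j⟩
    simp only [waux, eaux, uaux]
    simp
  have hw0 : ∀ q, q ∉ Set.range eaux → waux t dt F q = 0 := by
    rintro ⟨n, j⟩ hq
    have hnj : ¬ j ≤ n := by
      intro hle
      exact hq ⟨(n - j, j), by
        simp only [eaux, Prod.mk.injEq]
        exact ⟨Nat.sub_add_cancel hle, trivial⟩⟩
    rw [waux, if_neg hnj]
  have hsw : Summable (waux t dt F) :=
    (he.summable_iff hw0).mp (hsu.congr fun q => (hwe q).symm)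
  have hA : ∑' q, uaux t dt F q = ∑' n, pk (t + dt) n * F n := by
    have h1 : ∑' q, waux t dt F (eaux q) = ∑' q, waux t dt F q := by
      refine Function.Injective.tsum_eq he ?_
      intro q hq
      by_contra hq'
      exact hq (hw0 q hq')
    have h2 : ∑' q, uaux t dt F q = ∑' q, waux t dt F q := by
      rw [← h1]; exact tsum_congr fun q => (hwe q).symm
    rw [h2, Summable.tsum_prod' hsw (fun n => summable_of_ne_finset_zero
      (s := Finset.range (n+1)) (fun j hj => by
        rw [waux, if_neg (by simp at hj; omega)]))]
    refine tsum_congr fun n => ?_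
    rw [tsum_eq_sum (s := Finset.range (n+1)) (fun j hj => by
      rw [waux, if_neg (by simp at hj; omega)])]
    have hterm : ∀ j ∈ Finset.range (n+1), waux t dt F (n, j) = (pk t (n - j) * pk dt j) * F n := by
      intro j hj
      rw [waux, if_pos (by simp at hj; omega)]
    rw [Finset.sum_congr rfl hterm, ← Finset.sum_mul, pk_conv]
  have hB : ∑' q, vaux t dt F q = ∑' n, pk t n * F n := by
    rw [Summable.tsum_prod' hsv (fun m => ((summable_pk dt).mul_left (pk t m * F m)).congr
      (fun j => by rw [vaux]))]
    refine tsum_congr fun m => ?_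
    rw [show (fun j => vaux t dt F (m, j)) = fun j => (pk t m * F m) * pk dt j by
      funext j; rw [vaux]]
    rw [tsum_mul_left, tsum_pk, mul_one]
  have hdiff : (∑' n, pk (t + dt) n * F n) - (∑' n, pk t n * F n)
      = ∑' q, (uaux t dt F q - vaux t dt F q) := by
    rw [← hA, ← hB, Summable.tsum_sub hsu hsv]
  have hbnd : ∀ q, ‖uaux t dt F q - vaux t dt F q‖ ≤ (pk t q.1 * (pk dt q.2 * q.2)) * K := by
    rintro ⟨m, j⟩
    have h0 : (0:ℝ) ≤ pk t m * pk dt j := mul_nonneg (hpkt0 m) (hpkd0 j)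
    have heq : uaux t dt F (m, j) - vaux t dt F (m, j)
        = (pk t m * pk dt j) * (F (m + j) - F m) := by
      rw [uaux, vaux]; ring
    rw [heq, Real.norm_eq_abs, abs_mul, abs_of_nonneg h0]
    calc pk t m * pk dt j * |F (m + j) - F m|
        ≤ pk t m * pk dt j * (K * j) := mul_le_mul_of_nonneg_left (hFstep m j) h0
      _ = (pk t m * (pk dt j * (j:ℝ))) * K := by ring
  have hsbnd : Summable (fun q : ℕ × ℕ => (pk t q.1 * (pk dt q.2 * q.2)) * K) :=
    hmaj2.mul_right K
  have hsnorm : Summable (fun q => ‖uaux t dt F q - vaux t dt F q‖) :=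
    Summable.of_norm_bounded hsbnd (fun q => by rw [norm_norm]; exact hbnd q)
  have hbndsum : ∑' q : ℕ × ℕ, (pk t q.1 * (pk dt q.2 * q.2)) * K = K * dt := by
    have h1 : ∑' q : ℕ × ℕ, pk t q.1 * (pk dt q.2 * q.2) * K
        = ∑' (m : ℕ) (j : ℕ), pk t m * (pk dt j * j) * K :=
      Summable.tsum_prod' (hmaj2.mul_right K) (fun m => ((summable_pk_mul dt).mul_left (pk t m)).mul_right K)
    rw [h1]
    have hinner : ∀ m : ℕ, ∑' j : ℕ, pk t m * (pk dt j * j) * K = pk t m * (dt * K) := by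
      intro m
      calc ∑' j : ℕ, pk t m * (pk dt j * j) * K = ∑' j : ℕ, pk t m * ((pk dt j * j) * K) := by
            apply tsum_congr; intro j; ring
        _ = pk t m * ∑' j : ℕ, (pk dt j * j) * K := by rw [tsum_mul_left]
        _ = pk t m * ((∑' j : ℕ, pk dt j * j) * K) := by rw [tsum_mul_right]
        _ = pk t m * (dt * K) := by rw [tsum_pk_mul]
    rw [tsum_congr hinner, tsum_mul_right, tsum_pk, one_mul, mul_comm]
  rw [hdiff, ← Real.norm_eq_abs]
  calc ‖∑' q, (uaux t dt F q - vaux t dt F q)‖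
      ≤ ∑' q, ‖uaux t dt F q - vaux t dt F q‖ := norm_tsum_le_tsum_norm hsnorm
    _ ≤ ∑' q : ℕ × ℕ, (pk t q.1 * (pk dt q.2 * q.2)) * K := Summable.tsum_le_tsum hbnd hsnorm hsbnd
    _ = K * dt := hbndsum

end seq

section final
variable {d : ℕ} {zeta : Finset (Pt d) → ℝ} {c1 c2 : ℝ}

lemma poissonExp_eq (zeta : Finset (Pt d) → ℝ) (lam s : ℝ) :
    poissonExp d zeta lam s = ∑' n, pk (lam * s ^ d) n * Fint d zeta s n := rfl

lemma poissonExp_diff (hd : 1 ≤ d) (hzeta0 : zeta ∅ = 0)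
    (hzetann : ∀ X, 0 ≤ zeta X)
    (hP1 : ∀ k : ℕ, Measurable fun y : Fin k → Pt d => zeta (Finset.image y Finset.univ))
    (hP2 : ∀ (X : Finset (Pt d)) (x : Pt d), zeta (X.image fun y => x + y) = zeta X)
    (hc1 : 0 ≤ c1) (hc2 : 0 ≤ c2)
    (hP3 : ∀ Y Z : Finset (Pt d), Disjoint Y Z → zeta (Y ∪ Z) ≤ zeta Y + zeta Z + c1)
    (hP4 : ∀ Y Z : Finset (Pt d), Disjoint Y Z →
      zeta Y + zeta Z - c2 * (bdry d Y Z : ℝ) ≤ zeta (Y ∪ Z))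
    {lam lam' s : ℝ} (h0 : 0 < lam) (hle : lam ≤ lam') (hs : 0 < s) :
    |poissonExp d zeta lam' s - poissonExp d zeta lam s|
      ≤ max (c1 + zeta {0}) (c2 - zeta {0}) * ((lam' - lam) * s ^ d) := by
  set K := max (c1 + zeta {0}) (c2 - zeta {0}) with hK
  set Kup := zeta {0} + c1 with hKup
  have hK0 : 0 ≤ K := le_trans (add_nonneg hc1 (hzetann _)) (le_max_left _ _)
  have hKup0 : 0 ≤ Kup := add_nonneg (hzetann _) hc1
  have hsd : 0 < s ^ d := pow_pos hs d
  have hmain := seq_diff_bound (Fint d zeta s) K Kup hK0 hKup0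
    (fun n => Fint_nonneg hzetann s n)
    (fun n => Fint_le hd hs hzeta0 hzetann hc1 hP2 hP3 n)
    (fun k => Fint_succ_bound hd hs hzeta0 hzetann hP1 hP2 hc1 hc2 hP3 hP4 k)
    (t := lam * s ^ d) (dt := (lam' - lam) * s ^ d)
    (by positivity) (by nlinarith)
  rw [show lam * s ^ d + (lam' - lam) * s ^ d = lam' * s ^ d by ring] at hmain
  rw [poissonExp_eq, poissonExp_eq]
  exact hmain

theorem lambda_rho_lipschitz' (hd : 1 ≤ d)
    (hzeta0 : zeta ∅ = 0) (hzetann : ∀ X, 0 ≤ zeta X)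
    (hP1 : ∀ k : ℕ, Measurable fun y : Fin k → Pt d => zeta (Finset.image y Finset.univ))
    (hP2 : ∀ (X : Finset (Pt d)) (x : Pt d), zeta (X.image fun y => x + y) = zeta X)
    (hc1 : 0 ≤ c1) (hc2 : 0 ≤ c2)
    (hP3 : ∀ Y Z : Finset (Pt d), Disjoint Y Z → zeta (Y ∪ Z) ≤ zeta Y + zeta Z + c1)
    (hP4 : ∀ Y Z : Finset (Pt d), Disjoint Y Z →
      zeta Y + zeta Z - c2 * (bdry d Y Z : ℝ) ≤ zeta (Y ∪ Z))
    (ρ : ℝ → ℝ)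
    (hρ : ∀ lam : ℝ, 0 < lam →
      Tendsto (fun s : ℝ => poissonExp d zeta lam s / (lam * s ^ d)) atTop
        (nhds (ρ lam))) :
    (∀ lam lam' : ℝ, 0 < lam → lam ≤ lam' →
      |lam' * ρ lam' - lam * ρ lam|
        ≤ max (c1 + zeta {0}) (c2 - zeta {0}) * (lam' - lam)) ∧
    ContinuousOn ρ (Set.Ioi 0) := by
  set K := max (c1 + zeta {0}) (c2 - zeta {0}) with hK
  have hK0 : 0 ≤ K := le_trans (add_nonneg hc1 (hzetann _)) (le_max_left _ _)
  have hlim : ∀ lam : ℝ, 0 < lam →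
      Tendsto (fun s : ℝ => poissonExp d zeta lam s / s ^ d) atTop (nhds (lam * ρ lam)) := by
    intro lam hlam
    have h1 := (hρ lam hlam).const_mul lam
    refine h1.congr fun s => ?_
    rw [← mul_div_assoc, mul_div_mul_left _ _ (ne_of_gt hlam)]
  have hpart1 : ∀ lam lam' : ℝ, 0 < lam → lam ≤ lam' →
      |lam' * ρ lam' - lam * ρ lam| ≤ K * (lam' - lam) := by
    intro lam lam' hlam hle
    have hlam' : 0 < lam' := lt_of_lt_of_le hlam hle
    have h3 := ((hlim lam' hlam').sub (hlim lam hlam)).abs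
    refine le_of_tendsto h3 ?_
    rw [eventually_atTop]
    refine ⟨1, fun s hs1 => ?_⟩
    have hs : 0 < s := lt_of_lt_of_le one_pos hs1
    have hsd : 0 < s ^ d := pow_pos hs d
    rw [div_sub_div_same, abs_div, abs_of_pos hsd, div_le_iff₀ hsd]
    calc |poissonExp d zeta lam' s - poissonExp d zeta lam s|
        ≤ K * ((lam' - lam) * s ^ d) :=
          poissonExp_diff hd hzeta0 hzetann hP1 hP2 hc1 hc2 hP3 hP4 hlam hle hs
      _ = K * (lam' - lam) * s ^ d := by ring
  refine ⟨hpart1, ?_⟩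
  have hglip : LipschitzOnWith K.toNNReal (fun x => x * ρ x) (Set.Ioi 0) := by
    apply LipschitzOnWith.of_dist_le_mul
    intro x hx y hy
    rw [Real.coe_toNNReal K hK0, Real.dist_eq, Real.dist_eq]
    rcases le_total y x with h | h
    · have := hpart1 y x hy h
      rw [abs_of_nonneg (by linarith : (0:ℝ) ≤ x - y)]
      exact this
    · have := hpart1 x y hx h
      rw [abs_sub_comm, abs_sub_comm x y, abs_of_nonneg (by linarith : (0:ℝ) ≤ y - x)]
      exact this
  have hgcont : ContinuousOn (fun x => x * ρ x) (Set.Ioi 0) := hglip.continuousOn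
  have hdivcont : ContinuousOn (fun x => (x * ρ x) / x) (Set.Ioi 0) :=
    hgcont.div continuousOn_id (fun x hx => ne_of_gt hx)
  refine hdivcont.congr fun x hx => ?_
  show ρ x = x * ρ x / x
  rw [mul_comm, mul_div_assoc, div_self (ne_of_gt hx), mul_one]

end final


/-- `λ ↦ λ·ρ(λ)` is Lipschitz with constant `K = max(c₁+ζ({o}), c₂−ζ({o}))`,
and `ρ` is continuous on `(0,∞)`. -/
theorem lambda_rho_lipschitz {d : ℕ} (hd : 1 ≤ d)
    (zeta : Finset (Pt d) → ℝ) (hzeta0 : zeta ∅ = 0) (hzetann : ∀ X, 0 ≤ zeta X)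
    -- P1 (measurability)
    (hP1 : ∀ k : ℕ, Measurable fun y : Fin k → Pt d => zeta (Finset.image y Finset.univ))
    -- P2 (translation invariance)
    (hP2 : ∀ (X : Finset (Pt d)) (x : Pt d), zeta (X.image fun y => x + y) = zeta X)
    (c1 c2 : ℝ) (hc1 : 0 ≤ c1) (hc2 : 0 ≤ c2)
    -- P3 (almost subadditivity)
    (hP3 : ∀ Y Z : Finset (Pt d), Disjoint Y Z → zeta (Y ∪ Z) ≤ zeta Y + zeta Z + c1)
    -- P4 (superadditivity up to boundary)
    (hP4 : ∀ Y Z : Finset (Pt d), Disjoint Y Z →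
      zeta Y + zeta Z - c2 * (bdry d Y Z : ℝ) ≤ zeta (Y ∪ Z))
    (ρ : ℝ → ℝ)
    (hρ : ∀ lam : ℝ, 0 < lam →
      Tendsto (fun s : ℝ => poissonExp d zeta lam s / (lam * s ^ d)) atTop
        (nhds (ρ lam))) :
    (∀ lam lam' : ℝ, 0 < lam → lam ≤ lam' →
      |lam' * ρ lam' - lam * ρ lam|
        ≤ max (c1 + zeta {0}) (c2 - zeta {0}) * (lam' - lam)) ∧
    ContinuousOn ρ (Set.Ioi 0) :=
  lambda_rho_lipschitz' hd hzeta0 hzetann hP1 hP2 hc1 hc2 hP3 hP4 ρ hρ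
end
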